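/- Reduction equivalence between the single-machine partial-throughput problem and two-machine non-preemptive precedence scheduling: let I = (J, p, r, d) be an instance of the single-machine problem 1|r_j,d_j|Σ p_j U'_j, let T = Σ_{j∈J} p_j ≥ max_j d_j, and let I' be the P2|prec|C_max instance obtained by adding T unit-length chain jobs j^chain_1 ≺ ... ≺ j^chain_T (with r of j^chain_t equal to t−1 and d equal to t) and setting j ≺ j' for all jobs (original or chain) with d_j ≤ r_{j'}. Then: (a) any solution to I with cost δT yields a schedule for I' of makespan at most (1+δ)T; (b) any schedule for I' of makespan (1+δ)T yields a solution to I of cost at most 2δT. -/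

import Mathlib

open Finset

/-- A valid non-preemptive schedule of precedence-constrained jobs on `m` identical
machines with makespan bound `Cmax`. -/
def ValidSchedule {J : Type} (m : ℕ) (p : J → ℕ) (prec : J → J → Prop)
    (start : J → ℕ) (mach : J → Fin m) (Cmax : ℕ) : Prop :=
  (∀ j, start j + p j ≤ Cmax) ∧
  (∀ j j', prec j j' → start j + p j ≤ start j') ∧
  (∀ j j', j ≠ j' → mach j = mach j' →
    start j + p j ≤ start j' ∨ start j' + p j' ≤ start j)

/-- A solution of the single-machine partial-throughput problem `1|r_j,d_j|Σ p_j U'_j`: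
each job `j` is processed non-preemptively for `q j ≤ p j` units during `(s j, s j + q j]`,
entirely inside its window `(r j, d j]`, and the processed intervals of distinct
(nontrivially processed) jobs are disjoint. Its cost is `∑ j (p j − q j)`. -/
def PartialSol (n : ℕ) (p r d : Fin n → ℕ) (s q : Fin n → ℕ) : Prop :=
  (∀ j, q j ≤ p j) ∧ (∀ j, r j ≤ s j) ∧ (∀ j, s j + q j ≤ d j) ∧
  (∀ j j', j ≠ j' → 0 < q j → 0 < q j' → s j + q j ≤ s j' ∨ s j' + q j' ≤ s j)

/-- Sizes in the two-machine instance `I'`: original jobs keep their sizes, chain jobs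
are unit length. -/
def redSize (n T : ℕ) (p : Fin n → ℕ) : Fin n ⊕ Fin T → ℕ :=
  Sum.elim p (fun _ => 1)

/-- Release times in `I'`: the `t`-th chain job has release time `t` (0-indexed). -/
def redRel (n T : ℕ) (r : Fin n → ℕ) : Fin n ⊕ Fin T → ℕ :=
  Sum.elim r (fun t => (t : ℕ))

/-- Deadlines in `I'`: the `t`-th chain job has deadline `t + 1`. -/
def redDead (n T : ℕ) (d : Fin n → ℕ) : Fin n ⊕ Fin T → ℕ :=
  Sum.elim d (fun t => (t : ℕ) + 1)

/-- The precedence order of `I'`: `a ≺ b` iff the deadline of `a` is at most the release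
time of `b`. -/
def redPrec (n T : ℕ) (r d : Fin n → ℕ) (a b : Fin n ⊕ Fin T) : Prop :=
  redDead n T d a ≤ redRel n T r b

open scoped Classical in
theorem partA {n : ℕ} (p r d s q : Fin n → ℕ) (T : ℕ)
    (hwin : ∀ j, r j + p j ≤ d j) (hTd : ∀ j, d j ≤ T)
    (hq : ∀ j, q j ≤ p j) (hrs : ∀ j, r j ≤ s j) (hsd : ∀ j, s j + q j ≤ d j)
    (hs0 : ∀ j, q j = 0 → s j = r j)
    (hdisj : ∀ j j', j ≠ j' → 0 < q j → 0 < q j' → s j + q j ≤ s j' ∨ s j' + q j' ≤ s j) :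
    ∃ (start : Fin n ⊕ Fin T → ℕ) (mach : Fin n ⊕ Fin T → Fin 2),
      ValidSchedule 2 (redSize n T p) (redPrec n T r d) start mach (T + ∑ j, (p j - q j)) := by
  set x : Fin n → ℕ := fun j => p j - q j with hx
  set c : Fin n → ℕ := fun j => s j + q j with hc
  set L : Fin n → Fin n → Prop := fun j j' =>
    c j < c j' ∨ (c j = c j' ∧ (d j < d j' ∨ (d j = d j' ∧
      (r j < r j' ∨ (r j = r j' ∧ (j : ℕ) < (j' : ℕ)))))) with hL
  have hLc : ∀ k j, L k j → c k ≤ c j := by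
    intro k j h; simp only [hL] at h; omega
  have hLtrans : ∀ a b e, L a b → L b e → L a e := by
    intro a b e h1 h2; simp only [hL] at *; omega
  have hLtotal : ∀ a b : Fin n, a ≠ b → L a b ∨ L b a := by
    intro a b hab
    have hv : (a : ℕ) ≠ (b : ℕ) := fun h => hab (Fin.val_injective h)
    simp only [hL]; omega
  have hLirrefl : ∀ a, ¬ L a a := by
    intro a h; simp only [hL] at h; omega
  have hnotMem : ∀ j, j ∉ univ.filter (fun k => L k j) := by
    intro j h; exact hLirrefl j (Finset.mem_filter.mp h).2
  set G : Fin n → ℕ := fun j => ∑ k ∈ univ.filter (fun k => L k j), x k with hG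
  set F : ℕ → ℕ := fun t => ∑ k ∈ univ.filter (fun k => c k ≤ t), x k with hF
  set X : ℕ := ∑ k, x k with hX
  have hrc : ∀ j, r j ≤ c j := fun j => le_trans (hrs j) (Nat.le_add_right _ _)
  have hcd : ∀ j, c j ≤ d j := hsd
  have hpx : ∀ j, p j = q j + x j := by
    intro j; have := hq j; simp only [hx]; omega
  have hGG : ∀ j j', L j j' → G j + x j ≤ G j' := by
    intro j j' h
    have hsub : insert j (univ.filter fun k => L k j) ⊆ univ.filter fun k => L k j' := by
      intro k hk
      rcases Finset.mem_insert.mp hk with rfl | hk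
      · exact Finset.mem_filter.mpr ⟨Finset.mem_univ _, h⟩
      · exact Finset.mem_filter.mpr ⟨Finset.mem_univ _,
          hLtrans _ _ _ (Finset.mem_filter.mp hk).2 h⟩
    calc G j + x j = ∑ k ∈ insert j (univ.filter fun k => L k j), x k := by
          rw [Finset.sum_insert (hnotMem j)]; simp only [hG]; omega
      _ ≤ G j' := Finset.sum_le_sum_of_subset hsub
  have hGF : ∀ j t, c j ≤ t → G j + x j ≤ F t := by
    intro j t h
    have hsub : insert j (univ.filter fun k => L k j) ⊆ univ.filter fun k => c k ≤ t := by
      intro k hk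
      rcases Finset.mem_insert.mp hk with rfl | hk
      · exact Finset.mem_filter.mpr ⟨Finset.mem_univ _, h⟩
      · exact Finset.mem_filter.mpr ⟨Finset.mem_univ _,
          le_trans (hLc _ _ (Finset.mem_filter.mp hk).2) h⟩
    calc G j + x j = ∑ k ∈ insert j (univ.filter fun k => L k j), x k := by
          rw [Finset.sum_insert (hnotMem j)]; simp only [hG]; omega
      _ ≤ F t := Finset.sum_le_sum_of_subset hsub
  have hFG : ∀ j t, t < r j → F t ≤ G j := by
    intro j t h
    apply Finset.sum_le_sum_of_subset
    intro k hk
    have hck := (Finset.mem_filter.mp hk).2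
    have : c k < c j := lt_of_le_of_lt hck (lt_of_lt_of_le h (hrc j))
    exact Finset.mem_filter.mpr ⟨Finset.mem_univ _, by simp only [hL]; omega⟩
  have hGX : ∀ j, G j + x j ≤ X := by
    intro j
    calc G j + x j = ∑ k ∈ insert j (univ.filter fun k => L k j), x k := by
          rw [Finset.sum_insert (hnotMem j)]; simp only [hG]; omega
      _ ≤ X := Finset.sum_le_sum_of_subset (Finset.subset_univ _)
  have hFX : ∀ t, F t ≤ X := fun t => Finset.sum_le_sum_of_subset (Finset.filter_subset _ _)
  have hFmono : ∀ t t', t ≤ t' → F t ≤ F t' := by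
    intro t t' h
    apply Finset.sum_le_sum_of_subset
    intro k hk
    exact Finset.mem_filter.mpr ⟨Finset.mem_univ _,
      le_trans (Finset.mem_filter.mp hk).2 h⟩
  -- the degenerate-tie lemma
  have hdeg : ∀ j j', j ≠ j' → d j ≤ r j' → ¬ L j j' →
      p j = 0 ∧ p j' = 0 ∧ G j ≤ G j' := by
    intro j j' hne hp hnl
    have hL' : L j' j := (hLtotal j j' hne).resolve_left hnl
    have hLL : c j' < c j ∨ (c j' = c j ∧ (d j' < d j ∨ (d j' = d j ∧
        (r j' < r j ∨ (r j' = r j ∧ (j' : ℕ) < (j : ℕ)))))) := by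
      simpa only [hL] using hL'
    have e1 : c j ≤ d j := hcd j
    have e2 : r j' ≤ c j' := hrc j'
    have e3 : r j ≤ c j := hrc j
    have w1 := hwin j
    have w2 := hwin j'
    have key : c j = c j' ∧ d j = d j' ∧ d j = c j ∧ r j' = c j ∧ r j = c j ∧
        p j = 0 ∧ p j' = 0 := by
      have := hcd j'
      omega
    refine ⟨key.2.2.2.2.2.1, key.2.2.2.2.2.2, ?_⟩
    -- G j ≤ G j'
    have hsplit := Finset.sum_inter_add_sum_sdiff (univ.filter fun k => L k j)
      (univ.filter fun k => L k j') x
    have h1 : ∑ k ∈ (univ.filter fun k => L k j) ∩ (univ.filter fun k => L k j'), x k ≤ G j' :=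
      Finset.sum_le_sum_of_subset (Finset.inter_subset_right)
    have h2 : ∑ k ∈ (univ.filter fun k => L k j) \ (univ.filter fun k => L k j'), x k = 0 := by
      apply Finset.sum_eq_zero
      intro k hk
      rw [Finset.mem_sdiff, Finset.mem_filter, Finset.mem_filter] at hk
      have hkj : L k j := hk.1.2
      have hknj' : ¬ L k j' := fun h => hk.2 ⟨Finset.mem_univ _, h⟩
      by_cases hkj' : k = j'
      · subst hkj'; simp only [hx]; omega
      · have hLk : L j' k := (hLtotal j' k (Ne.symm hkj')).resolve_right hknj'
        have a1 : c j' < c k ∨ (c j' = c k ∧ (d j' < d k ∨ (d j' = d k ∧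
            (r j' < r k ∨ (r j' = r k ∧ (j' : ℕ) < (k : ℕ)))))) := by simpa only [hL] using hLk
        have a2 : c k < c j ∨ (c k = c j ∧ (d k < d j ∨ (d k = d j ∧
            (r k < r j ∨ (r k = r j ∧ (k : ℕ) < (j : ℕ)))))) := by simpa only [hL] using hkj
        have wk := hwin k
        have qk := hq k
        have e4 : r k ≤ c k := hrc k
        have e5 : c k ≤ d k := hcd k
        simp only [hx]
        omega
    simp only [hG] at h1 hsplit ⊢
    omega
  refine ⟨Sum.elim (fun j => s j + G j) (fun t => (t : ℕ) + F (t : ℕ)),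
    Sum.elim (fun j => if q j = 0 then (0 : Fin 2) else 1) (fun _ => 0), ?_, ?_, ?_⟩
  · -- makespan
    rintro (j | t)
    · have := hpx j; have := hsd j; have := hTd j; have := hGX j
      simp only [Sum.elim_inl, redSize]
      omega
    · have := t.isLt; have := hFX (t : ℕ)
      simp only [Sum.elim_inr, redSize]
      omega
  · -- precedence
    rintro (j | t) (j' | t') hp <;>
      simp only [redPrec, redDead, redRel, redSize, Sum.elim_inl, Sum.elim_inr] at hp ⊢
    · -- original ≺ original
      by_cases hjj : j = j'
      · subst hjj
        have := hwin j; have := hq j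
        have hp0 : p j = 0 := by omega
        omega
      by_cases hLjj : L j j'
      · have := hGG j j' hLjj; have := hpx j; have := hsd j; have := hrs j'
        omega
      · obtain ⟨hp1, hp2, hp3⟩ := hdeg j j' hjj hp hLjj
        have := hq j
        have h01 : q j = 0 := by omega
        have h02 : q j' = 0 := by
          have := hq j'; omega
        rw [hs0 j h01, hs0 j' h02]
        have := hrc j; have := hcd j
        omega
    · -- original ≺ chain
      have h1 : c j ≤ (t' : ℕ) := le_trans (hcd j) hp
      have := hGF j (t' : ℕ) h1; have := hpx j; have := hsd j
      omega
    · -- chain ≺ original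
      have := hFG j' (t : ℕ) (by omega); have := hrs j'
      omega
    · -- chain ≺ chain
      have := hFmono (t : ℕ) (t' : ℕ) (by omega)
      omega
  · -- machine disjointness
    rintro (j | t) (j' | t') hne hm <;>
      simp only [Sum.elim_inl, Sum.elim_inr, redSize] at hm ⊢
    · -- two originals
      have hne' : j ≠ j' := fun h => hne (by rw [h])
      by_cases h1 : q j = 0 <;> by_cases h2 : q j' = 0
      · -- both on machine 0
        rcases hLtotal j j' hne' with hL12 | hL12
        · left
          have := hGG j j' hL12; have := hpx j
          have hcc : c j ≤ c j' := hLc _ _ hL12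
          rw [hs0 j h1, hs0 j' h2]
          have e1 : c j = r j := by have := hs0 j h1; simp only [hc]; omega
          have e2 : c j' = r j' := by have := hs0 j' h2; simp only [hc]; omega
          omega
        · right
          have := hGG j' j hL12; have := hpx j'
          have hcc : c j' ≤ c j := hLc _ _ hL12
          rw [hs0 j h1, hs0 j' h2]
          have e1 : c j = r j := by have := hs0 j h1; simp only [hc]; omega
          have e2 : c j' = r j' := by have := hs0 j' h2; simp only [hc]; omega
          omega
      · simp [h1, h2] at hm
      · simp [h1, h2] at hm
      · -- both on machine 1
        rcases hdisj j j' hne' (by omega) (by omega) with hd12 | hd12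
        · left
          have hcc : L j j' := by simp only [hL, hc]; omega
          have := hGG j j' hcc
          have := hpx j
          omega
        · right
          have hcc : L j' j := by simp only [hL, hc]; omega
          have := hGG j' j hcc
          have := hpx j'
          omega
    · -- original vs chain : original must be on machine 0, i.e. q j = 0
      by_cases h1 : q j = 0
      · have e1 : c j = r j := by have := hs0 j h1; simp only [hc]; omega
        rw [hs0 j h1]
        by_cases h2 : (t' : ℕ) < r j
        · right
          have := hFG j (t' : ℕ) h2
          omega
        · left
          have := hGF j (t' : ℕ) (by omega)
          have := hpx j
          omega
      · simp [h1] at hm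
    · -- chain vs original
      by_cases h1 : q j' = 0
      · have e1 : c j' = r j' := by have := hs0 j' h1; simp only [hc]; omega
        rw [hs0 j' h1]
        by_cases h2 : (t : ℕ) < r j'
        · left
          have := hFG j' (t : ℕ) h2
          omega
        · right
          have := hGF j' (t : ℕ) (by omega)
          have := hpx j'
          omega
      · simp [h1] at hm
    · -- two chains
      have hne' : (t : ℕ) ≠ (t' : ℕ) := by
        intro h; exact hne (by rw [Fin.val_injective h])
      rcases Nat.lt_or_ge (t : ℕ) (t' : ℕ) with h | h
      · left; have := hFmono (t : ℕ) (t' : ℕ) (by omega); omega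
      · right; have := hFmono (t' : ℕ) (t : ℕ) (by omega); omega

theorem partB {n : ℕ} (p r d : Fin n → ℕ) (T : ℕ)
    (hwin : ∀ j, r j + p j ≤ d j) (hTd : ∀ j, d j ≤ T) (hTpos : 0 < T)
    (start : Fin n ⊕ Fin T → ℕ) (mach : Fin n ⊕ Fin T → Fin 2) (Cmax : ℕ)
    (hvs : ValidSchedule 2 (redSize n T p) (redPrec n T r d) start mach Cmax) :
    ∃ s q : Fin n → ℕ, PartialSol n p r d s q ∧ T ≤ Cmax ∧
      (∑ j, (p j - q j)) ≤ 2 * (Cmax - T) := by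
  obtain ⟨h1, h2, h3⟩ := hvs
  set a : Fin T → ℕ := fun t => start (Sum.inr t) with ha
  set b : Fin n → ℕ := fun j => start (Sum.inl j) with hb
  have haj : ∀ t, start (Sum.inr t) = a t := fun _ => rfl
  have hbj : ∀ j, start (Sum.inl j) = b j := fun _ => rfl
  have hchain : ∀ t t' : Fin T, (t : ℕ) < (t' : ℕ) → a t + 1 ≤ a t' := by
    intro t t' h
    have := h2 (Sum.inr t) (Sum.inr t') (by simp [redPrec, redDead, redRel]; omega)
    simpa [redSize, ha] using this
  have hmono : ∀ t t' : Fin T, (t : ℕ) ≤ (t' : ℕ) → a t ≤ a t' := by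
    intro t t' h
    rcases Nat.eq_or_lt_of_le h with he | hl
    · rw [Fin.val_injective he]
    · exact le_of_lt (by have := hchain t t' hl; omega)
  have hainj : ∀ t t' : Fin T, a t = a t' → t = t' := by
    intro t t' h
    rcases Nat.lt_trichotomy (t : ℕ) (t' : ℕ) with hl | he | hl
    · have := hchain t t' hl; omega
    · exact Fin.val_injective he
    · have := hchain t' t hl; omega
  have hlow' : ∀ m : ℕ, ∀ t : Fin T, (t : ℕ) = m → m ≤ a t := by
    intro m
    induction m with
    | zero => intro t _; exact Nat.zero_le _
    | succ k ih =>
      intro t htm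
      have hkT : k < T := by omega
      have hk := ih ⟨k, hkT⟩ rfl
      have := hchain ⟨k, hkT⟩ t (by simp; omega)
      omega
  have hlow : ∀ t : Fin T, (t : ℕ) ≤ a t := fun t => hlow' _ t rfl
  have haC : ∀ t : Fin T, a t + 1 ≤ Cmax := by
    intro t
    have := h1 (Sum.inr t)
    simpa [redSize, ha] using this
  have hbC : ∀ j, b j + p j ≤ Cmax := by
    intro j
    have := h1 (Sum.inl j)
    simpa [redSize, hb] using this
  have hCT : T ≤ Cmax := by
    have hT1 : T - 1 < T := by omega
    have e1 := hlow ⟨T - 1, hT1⟩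
    have e2 := haC ⟨T - 1, hT1⟩
    have e3 : ((⟨T - 1, hT1⟩ : Fin T) : ℕ) = T - 1 := rfl
    omega
  classical
  set φ : ℕ → ℕ := fun u => (univ.filter (fun t : Fin T => a t < u)).card with hφ
  set A : Fin n → Finset (Fin T) :=
    fun j => univ.filter (fun t : Fin T => b j ≤ a t ∧ a t < b j + p j) with hA
  set s : Fin n → ℕ := fun j => φ (b j) with hs
  set q : Fin n → ℕ := fun j => (A j).card with hq
  have hφmono : ∀ u u', u ≤ u' → φ u ≤ φ u' := by
    intro u u' h
    apply Finset.card_le_card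
    intro t ht
    simp only [Finset.mem_filter] at ht ⊢
    exact ⟨ht.1, lt_of_lt_of_le ht.2 h⟩
  have hφsplit : ∀ j, φ (b j + p j) = φ (b j) + (A j).card := by
    intro j
    have hun : univ.filter (fun t : Fin T => a t < b j + p j)
        = univ.filter (fun t : Fin T => a t < b j) ∪ A j := by
      ext t
      simp only [Finset.mem_filter, Finset.mem_union, hA, Finset.mem_univ, true_and]
      omega
    have hdis : Disjoint (univ.filter (fun t : Fin T => a t < b j)) (A j) := by
      rw [Finset.disjoint_left]
      intro t ht ht'
      simp only [Finset.mem_filter, hA, Finset.mem_univ, true_and] at ht ht'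
      omega
    simp only [hφ]
    rw [hun, Finset.card_union_of_disjoint hdis]
  have hL2 : ∀ (u m : ℕ), (∀ t : Fin T, a t < u → (t : ℕ) < m) → φ u ≤ m := by
    intro u m h
    have := Finset.card_le_card_of_injOn (f := fun t : Fin T => (t : ℕ))
      (s := univ.filter (fun t : Fin T => a t < u)) (t := Finset.range m)
      (by intro t ht; rw [Finset.mem_coe, Finset.mem_filter] at ht; simp [h t ht.2])
      (by intro t1 _ t2 _ hv; exact Fin.val_injective hv)
    simpa using this
  have hL1 : ∀ (u m : ℕ), m ≤ T → (∀ t : Fin T, (t : ℕ) < m → a t < u) → m ≤ φ u := by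
    intro u m hm h
    have := Finset.card_le_card_of_injOn (f := fun i : Fin m => (⟨i, lt_of_lt_of_le i.2 hm⟩ : Fin T))
      (s := univ) (t := univ.filter (fun t : Fin T => a t < u))
      (by intro i _; simp only [Finset.mem_coe, Finset.mem_filter, Finset.mem_univ, true_and]
          exact h ⟨i, lt_of_lt_of_le i.2 hm⟩ i.2)
      (by intro i1 _ i2 _ hv
          simpa [Fin.ext_iff] using hv)
    simpa using this
  -- φ (a t) ≤ t and t < φ-of-later
  have hφat : ∀ t : Fin T, φ (a t) ≤ (t : ℕ) := by
    intro t
    apply hL2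
    intro t' h
    by_contra hcon
    have := hmono t t' (by omega)
    omega
  have hφat2 : ∀ (t : Fin T) (u : ℕ), a t < u → (t : ℕ) + 1 ≤ φ u := by
    intro t u h
    apply hL1 _ _ (by have := t.isLt; omega)
    intro t' ht'
    have := hmono t' t (by omega)
    omega
  -- machine-based disjointness of the A sets
  have hAdisj : ∀ j j' : Fin n, j ≠ j' → ∀ t, t ∈ A j → t ∈ A j' → False := by
    intro j j' hne t ht ht'
    simp only [hA, Finset.mem_filter, Finset.mem_univ, true_and] at ht ht'
    have hmt : mach (Sum.inr t) ≠ mach (Sum.inl j) := by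
      intro he
      rcases h3 (Sum.inr t) (Sum.inl j) (by simp) he with hcon | hcon <;>
        simp only [redSize, Sum.elim_inl, Sum.elim_inr, haj, hbj] at hcon <;> omega
    have hmt' : mach (Sum.inr t) ≠ mach (Sum.inl j') := by
      intro he
      rcases h3 (Sum.inr t) (Sum.inl j') (by simp) he with hcon | hcon <;>
        simp only [redSize, Sum.elim_inl, Sum.elim_inr, haj, hbj] at hcon <;> omega
    have hmm : mach (Sum.inl j) = mach (Sum.inl j') := by
      have key : ∀ x y z : Fin 2, x ≠ y → x ≠ z → y = z := by decide
      exact key _ _ _ hmt hmt'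
    rcases h3 (Sum.inl j) (Sum.inl j') (by simp [hne]) hmm with hcon | hcon <;>
      simp only [redSize, Sum.elim_inl, hbj] at hcon <;> omega
  have himg : ∀ j, Finset.image (fun t : Fin T => (t : ℕ)) (A j)
      = Finset.Ico (s j) (s j + q j) := by
    intro j
    apply Finset.eq_of_subset_of_card_le
    · intro v hv
      simp only [Finset.mem_image] at hv
      obtain ⟨t, ht, rfl⟩ := hv
      simp only [hA, Finset.mem_filter, Finset.mem_univ, true_and] at ht
      simp only [Finset.mem_Ico]
      constructor
      · have h5 := hφmono (b j) (a t) ht.1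
        have h6 := hφat t
        simp only [hs]
        omega
      · have h5 := hφat2 t (b j + p j) ht.2
        have h6 := hφsplit j
        simp only [hs, hq]
        omega
    · rw [Nat.card_Ico, Finset.card_image_of_injOn
        (fun t1 _ t2 _ hv => Fin.val_injective hv)]
      simp only [hq]
      omega
  refine ⟨s, q, ⟨?_, ?_, ?_, ?_⟩, hCT, ?_⟩
  · -- q j ≤ p j
    intro j
    have := Finset.card_le_card_of_injOn (f := a) (s := A j)
      (t := Finset.Ico (b j) (b j + p j))
      (by intro t ht; simp only [hA, Finset.mem_coe, Finset.mem_filter, Finset.mem_univ, true_and] at ht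
          simp [Finset.mem_Ico, ht.1, ht.2])
      (fun t1 _ t2 _ hv => hainj t1 t2 hv)
    simpa [hq, Nat.card_Ico] using this
  · -- r j ≤ s j
    intro j
    by_cases hr : r j = 0
    · simp [hr]
    · have hrT : r j - 1 < T := by have := hTd j; have := hwin j; omega
      have hpr := h2 (Sum.inr ⟨r j - 1, hrT⟩) (Sum.inl j)
        (by simp [redPrec, redDead, redRel]; omega)
      simp only [redSize, Sum.elim_inr, haj, hbj] at hpr
      have e3 : ((⟨r j - 1, hrT⟩ : Fin T) : ℕ) = r j - 1 := rfl
      simp only [hs]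
      apply hL1 _ _ (by have := hTd j; have := hwin j; omega)
      intro t ht
      have := hmono t ⟨r j - 1, hrT⟩ (by simp; omega)
      omega
  · -- s j + q j ≤ d j
    intro j
    have hsq : s j + q j = φ (b j + p j) := by
      simp only [hs, hq]; rw [hφsplit j]
    rw [hsq]
    by_cases hd : d j < T
    · have hpr := h2 (Sum.inl j) (Sum.inr ⟨d j, hd⟩)
        (by simp [redPrec, redDead, redRel])
      simp only [redSize, Sum.elim_inl, haj, hbj] at hpr
      have e3 : ((⟨d j, hd⟩ : Fin T) : ℕ) = d j := rfl
      apply hL2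
      intro t ht
      by_contra hcon
      have := hmono ⟨d j, hd⟩ t (by simp; omega)
      omega
    · have := hTd j
      have hdT : d j = T := by omega
      rw [hdT]
      exact hL2 _ _ (fun t _ => t.isLt)
  · -- disjointness
    intro j j' hne hqj hqj'
    by_contra hcon
    push_neg at hcon
    obtain ⟨hc1, hc2⟩ := hcon
    have hv1 : max (s j) (s j') ∈ Finset.Ico (s j) (s j + q j) := by
      simp only [Finset.mem_Ico]; omega
    have hv2 : max (s j) (s j') ∈ Finset.Ico (s j') (s j' + q j') := by
      simp only [Finset.mem_Ico]; omega
    rw [← himg j] at hv1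
    rw [← himg j'] at hv2
    simp only [Finset.mem_image] at hv1 hv2
    obtain ⟨t, ht, htv⟩ := hv1
    obtain ⟨t', ht', htv'⟩ := hv2
    have : t = t' := Fin.val_injective (htv.trans htv'.symm)
    subst this
    exact hAdisj j j' hne t ht ht'
  · -- cost bound
    set Cset : Finset ℕ := Finset.image a univ with hCset
    have hCsub : ∀ u ∈ Cset, u < Cmax := by
      intro u hu
      simp only [hCset, Finset.mem_image] at hu
      obtain ⟨t, _, rfl⟩ := hu
      have := haC t
      omega
    have hCcard : Cset.card = T := by
      rw [hCset, Finset.card_image_of_injOn (fun t1 _ t2 _ hv => hainj t1 t2 hv)]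
      simp
    have hpq : ∀ j, p j - q j
        = ((Finset.Ico (b j) (b j + p j)).filter (fun u => u ∉ Cset)).card := by
      intro j
      have hsp := Finset.card_filter_add_card_filter_not
        (s := Finset.Ico (b j) (b j + p j)) (p := fun u => u ∈ Cset)
      have hfi : (Finset.Ico (b j) (b j + p j)).filter (fun u => u ∈ Cset)
          = Finset.image a (A j) := by
        ext u
        simp only [Finset.mem_filter, Finset.mem_Ico, hCset, Finset.mem_image, hA,
          Finset.mem_filter, Finset.mem_univ, true_and]
        constructor
        · rintro ⟨⟨hu1, hu2⟩, t, rfl⟩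
          exact ⟨t, ⟨hu1, hu2⟩, rfl⟩
        · rintro ⟨t, ⟨hu1, hu2⟩, rfl⟩
          exact ⟨⟨hu1, hu2⟩, t, rfl⟩
      have hfc : ((Finset.Ico (b j) (b j + p j)).filter (fun u => u ∈ Cset)).card = q j := by
        rw [hfi, Finset.card_image_of_injOn (fun t1 _ t2 _ hv => hainj t1 t2 hv)]
      rw [Nat.card_Ico] at hsp
      omega
    -- double counting
    have hWeq : ∀ j, ((Finset.Ico (b j) (b j + p j)).filter (fun u => u ∉ Cset))
        = (Finset.range Cmax).filter (fun u => u ∉ Cset ∧ b j ≤ u ∧ u < b j + p j) := by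
      intro j
      ext u
      simp only [Finset.mem_filter, Finset.mem_Ico, Finset.mem_range]
      have := hbC j
      constructor
      · rintro ⟨⟨hu1, hu2⟩, hu3⟩
        exact ⟨by omega, hu3, hu1, hu2⟩
      · rintro ⟨_, hu3, hu1, hu2⟩
        exact ⟨⟨hu1, hu2⟩, hu3⟩
    have hcount : ∀ u, u ∈ Finset.range Cmax →
        (univ.filter (fun j : Fin n => u ∉ Cset ∧ b j ≤ u ∧ u < b j + p j)).card
          ≤ if u ∈ Cset then 0 else 2 := by
      intro u _
      by_cases hu : u ∈ Cset
      · have hem : (univ.filter (fun j : Fin n => u ∉ Cset ∧ b j ≤ u ∧ u < b j + p j))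
            = ∅ := Finset.filter_eq_empty_iff.mpr (fun j _ hh => hh.1 hu)
        simp [hem, hu]
      · rw [if_neg hu]
        have := Finset.card_le_card_of_injOn (f := fun j : Fin n => mach (Sum.inl j))
          (s := univ.filter (fun j : Fin n => u ∉ Cset ∧ b j ≤ u ∧ u < b j + p j))
          (t := (univ : Finset (Fin 2)))
          (by intro j _; simp)
          (by intro j1 hj1 j2 hj2 hv
              simp only [Finset.mem_coe, Finset.mem_filter, Finset.mem_univ, true_and] at hj1 hj2
              by_contra hne
              rcases h3 (Sum.inl j1) (Sum.inl j2) (by simp [hne]) hv with hcon | hcon <;>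
                simp only [redSize, Sum.elim_inl, hbj] at hcon <;> omega)
        simpa using this
    calc ∑ j, (p j - q j)
        = ∑ j, ((Finset.range Cmax).filter
            (fun u => u ∉ Cset ∧ b j ≤ u ∧ u < b j + p j)).card := by
          apply Finset.sum_congr rfl
          intro j _
          rw [hpq j, hWeq j]
      _ = ∑ j, ∑ u ∈ Finset.range Cmax,
            (if u ∉ Cset ∧ b j ≤ u ∧ u < b j + p j then 1 else 0) := by
          apply Finset.sum_congr rfl
          intro j _
          rw [Finset.card_filter]
      _ = ∑ u ∈ Finset.range Cmax, ∑ j : Fin n,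
            (if u ∉ Cset ∧ b j ≤ u ∧ u < b j + p j then 1 else 0) := Finset.sum_comm
      _ = ∑ u ∈ Finset.range Cmax,
            (univ.filter (fun j : Fin n => u ∉ Cset ∧ b j ≤ u ∧ u < b j + p j)).card := by
          apply Finset.sum_congr rfl
          intro u _
          rw [Finset.card_filter]
      _ ≤ ∑ u ∈ Finset.range Cmax, (if u ∈ Cset then 0 else 2) :=
          Finset.sum_le_sum hcount
      _ = 2 * ((Finset.range Cmax).filter (fun u => u ∉ Cset)).card := by
          rw [Finset.card_filter, Finset.mul_sum]
          apply Finset.sum_congr rfl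
          intro u _
          by_cases hu : u ∈ Cset <;> simp [hu]
      _ ≤ 2 * (Cmax - T) := by
          have hsp := Finset.card_filter_add_card_filter_not
            (s := Finset.range Cmax) (p := fun u => u ∈ Cset)
          have : (Finset.range Cmax).filter (fun u => u ∈ Cset) = Cset := by
            ext u
            simp only [Finset.mem_filter, Finset.mem_range]
            exact ⟨fun h => h.2, fun h => ⟨hCsub u h, h⟩⟩
          rw [this, hCcard] at hsp
          have := Finset.card_range Cmax
          omega


/-- equivalence of the single-machine partial-throughput problem and the
constructed two-machine non-preemptive precedence instance `I'` with `T` unit chain jobs: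
(a) a solution of cost at most `δT` gives a schedule of `I'` with makespan at most
`(1+δ)T`; (b) a schedule of `I'` with makespan at most `(1+δ)T` gives a solution of
cost at most `2δT`. -/
theorem stmt12 (n : ℕ) (p r d : Fin n → ℕ)
    (hwin : ∀ j, r j + p j ≤ d j)
    (T : ℕ) (hT : T = ∑ j, p j) (hTd : ∀ j, d j ≤ T)
    (δ : ℝ) (hδ : 0 ≤ δ) :
    ((∃ s q : Fin n → ℕ, PartialSol n p r d s q ∧
        ((∑ j, (p j - q j) : ℕ) : ℝ) ≤ δ * T) →
      ∃ (start : Fin n ⊕ Fin T → ℕ) (mach : Fin n ⊕ Fin T → Fin 2) (Cmax : ℕ),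
        ValidSchedule 2 (redSize n T p) (redPrec n T r d) start mach Cmax ∧
        (Cmax : ℝ) ≤ (1 + δ) * T) ∧
    ((∃ (start : Fin n ⊕ Fin T → ℕ) (mach : Fin n ⊕ Fin T → Fin 2) (Cmax : ℕ),
        ValidSchedule 2 (redSize n T p) (redPrec n T r d) start mach Cmax ∧
        (Cmax : ℝ) ≤ (1 + δ) * T) →
      ∃ s q : Fin n → ℕ, PartialSol n p r d s q ∧
        ((∑ j, (p j - q j) : ℕ) : ℝ) ≤ 2 * δ * T) := by
  constructor
  · rintro ⟨s, q, ⟨hq, hrs, hsd, hdisj⟩, hcost⟩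
    set s' : Fin n → ℕ := fun j => if q j = 0 then r j else s j with hs'
    have hrs' : ∀ j, r j ≤ s' j := by
      intro j; simp only [hs']
      split_ifs
      · exact le_refl _
      · exact hrs j
    have hsd' : ∀ j, s' j + q j ≤ d j := by
      intro j; simp only [hs']
      split_ifs with h
      · have := hwin j; omega
      · exact hsd j
    have hs0 : ∀ j, q j = 0 → s' j = r j := by
      intro j h; simp only [hs', if_pos h]
    have hdisj' : ∀ j j', j ≠ j' → 0 < q j → 0 < q j' →
        s' j + q j ≤ s' j' ∨ s' j' + q j' ≤ s' j := by
      intro j j' hne h1 h2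
      have e1 : s' j = s j := by simp only [hs', if_neg (by omega : ¬ q j = 0)]
      have e2 : s' j' = s j' := by simp only [hs', if_neg (by omega : ¬ q j' = 0)]
      rw [e1, e2]
      exact hdisj j j' hne h1 h2
    obtain ⟨start, mach, hvs⟩ := partA p r d s' q T hwin hTd hq hrs' hsd' hs0 hdisj'
    refine ⟨start, mach, T + ∑ j, (p j - q j), hvs, ?_⟩
    rw [Nat.cast_add]
    have hr : (1 + δ) * (T : ℝ) = T + δ * T := by ring
    linarith [hcost]
  · rintro ⟨start, mach, Cmax, hvs, hC⟩
    by_cases hT0 : T = 0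
    · have hsum0 : ∑ j, p j = 0 := by rw [← hT]; exact hT0
      have hp0 : ∀ j, p j = 0 := fun j =>
        Finset.sum_eq_zero_iff.mp hsum0 j (Finset.mem_univ j)
      refine ⟨r, fun _ => 0, ⟨fun j => Nat.zero_le _, fun j => le_refl _,
        fun j => by have := hwin j; show r j + 0 ≤ d j; omega,
        fun j j' _ h1 _ => absurd h1 (lt_irrefl 0)⟩, ?_⟩
      have e : (∑ j, (p j - (fun _ : Fin n => (0 : ℕ)) j)) = 0 := by
        apply Finset.sum_eq_zero
        intro j _
        simp [hp0 j]
      rw [e, hT0]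
      simp
    · have hTpos : 0 < T := Nat.pos_of_ne_zero hT0
      obtain ⟨s, q, hps, hCT, hcost⟩ := partB p r d T hwin hTd hTpos start mach Cmax hvs
      refine ⟨s, q, hps, ?_⟩
      have h1 : ((∑ j, (p j - q j) : ℕ) : ℝ) ≤ ((2 * (Cmax - T) : ℕ) : ℝ) :=
        Nat.cast_le.mpr hcost
      have h2 : ((Cmax - T : ℕ) : ℝ) = (Cmax : ℝ) - T := Nat.cast_sub hCT
      have h3 : ((2 * (Cmax - T) : ℕ) : ℝ) = 2 * ((Cmax : ℝ) - T) := by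
        rw [Nat.cast_mul, h2]; norm_num
      have hr : (1 + δ) * (T : ℝ) = T + δ * T := by ring
      linarith [hC]
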